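/- Let a be a continuous sesquilinear form on a Hilbert space V densely and continuously embedded in a Hilbert space H, satisfying the generalized coercivity conditions |a(u,u)| + |a(u,Φ₁u)| ≥ α‖u‖²_V and |a(u,u)| + |a(Φ₂u,u)| ≥ α‖u‖²_V for all u ∈ V, where Φ₁, Φ₂ ∈ L(V) extend to bounded operators on H and α > 0. Define D(S) = {u ∈ V : v ↦ a(u,v) is continuous on V in the H-norm} and S : D(S) → H by a(u,v) = ⟨Su, v⟩_H. Then S is bijective from D(S) onto H with bounded inverse S⁻¹ ∈ L(H). -/

import Mathlib

open ContinuousLinearMap in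
lemma aux_surj_stmt12 {V : Type*} [NormedAddCommGroup V] [InnerProductSpace ℂ V]
    [CompleteSpace V]
    (A : V →L[ℂ] V) (c : ℝ) (hc : 0 < c)
    (h1 : ∀ u, c * ‖u‖ ≤ ‖A u‖)
    (h2 : ∀ u, c * ‖u‖ ≤ ‖ContinuousLinearMap.adjoint A u‖) :
    Function.Surjective A := by
  have hanti : AntilipschitzWith (⟨c, hc.le⟩ : NNReal)⁻¹ A := by
    apply A.antilipschitz_of_bound
    intro x
    change ‖x‖ ≤ c⁻¹ * ‖A x‖
    rw [le_inv_mul_iff₀ hc]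
    exact h1 x
  have hclosed : IsClosed (Set.range A) := hanti.isClosed_range A.uniformContinuous
  have hdense : (LinearMap.range (A : V →ₗ[ℂ] V)).topologicalClosure = ⊤ := by
    rw [Submodule.topologicalClosure_eq_top_iff, Submodule.eq_bot_iff]
    intro v hv
    have hAv : ContinuousLinearMap.adjoint A v = 0 := by
      rw [← inner_self_eq_zero (𝕜 := ℂ), ContinuousLinearMap.adjoint_inner_left]
      exact inner_eq_zero_symm.mp (hv _ (LinearMap.mem_range_self _ _))
    have h := h2 v
    rw [hAv, norm_zero] at h
    have hv0 : ‖v‖ ≤ 0 := by nlinarith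
    simpa using norm_le_zero_iff.mp hv0
  have hcl : (LinearMap.range (A : V →ₗ[ℂ] V)).topologicalClosure = LinearMap.range (A : V →ₗ[ℂ] V) := by
    apply le_antisymm _ (LinearMap.range (A : V →ₗ[ℂ] V)).le_topologicalClosure
    intro x hx
    have : x ∈ closure (Set.range A) := hx
    rwa [hclosed.closure_eq] at this
  intro y
  have : y ∈ LinearMap.range (A : V →ₗ[ℂ] V) := by rw [← hcl, hdense]; trivial
  exact this

set_option maxHeartbeats 1000000 in
/-- generalized Lax–Milgram, bijectivity: Let `V` be a Hilbert space
densely and continuously embedded (via `e`) in a Hilbert space `H`, and let `a` be a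
bounded sesquilinear form on `V` satisfying the generalized coercivity conditions
`|a(u,u)| + |a(u,Φ₁u)| ≥ α‖u‖²_V` and `|a(u,u)| + |a(Φ₂u,u)| ≥ α‖u‖²_V`, where
`Φ₁, Φ₂ ∈ L(V)` extend to bounded operators on `H` and `α > 0`.  Let `S` be the
operator on `H` with domain `D(S) = {u ∈ V : v ↦ a(u,v) is H-continuous}` defined by
`a(u,v) = ⟨Su, v⟩_H`.  Then `S : D(S) → H` is bijective with bounded inverse. -/
theorem stmt12 {V H : Type*}
    [NormedAddCommGroup V] [InnerProductSpace ℂ V] [CompleteSpace V]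
    [NormedAddCommGroup H] [InnerProductSpace ℂ H] [CompleteSpace H]
    (e : V →L[ℂ] H) (he_inj : Function.Injective e) (he_dense : DenseRange e)
    (a : V →ₛₗ[starRingEnd ℂ] V →ₗ[ℂ] ℂ)
    (habound : ∃ M : ℝ, ∀ u v : V, ‖a u v‖ ≤ M * ‖u‖ * ‖v‖)
    (Φ₁ Φ₂ : V →L[ℂ] V)
    (hΦ₁ext : ∃ Ψ₁ : H →L[ℂ] H, ∀ v : V, Ψ₁ (e v) = e (Φ₁ v))
    (hΦ₂ext : ∃ Ψ₂ : H →L[ℂ] H, ∀ v : V, Ψ₂ (e v) = e (Φ₂ v))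
    (α : ℝ) (hα : 0 < α)
    (hcoer1 : ∀ u : V, α * ‖u‖ ^ 2 ≤ ‖a u u‖ + ‖a u (Φ₁ u)‖)
    (hcoer2 : ∀ u : V, α * ‖u‖ ^ 2 ≤ ‖a u u‖ + ‖a (Φ₂ u) u‖)
    (S : H →ₗ.[ℂ] H)
    (hSdom : ∀ x : H, x ∈ S.domain ↔
      ∃ u : V, e u = x ∧ ∃ C : ℝ, ∀ v : V, ‖a u v‖ ≤ C * ‖e v‖)
    (hSval : ∀ (u : V) (hx : e u ∈ S.domain), ∀ v : V,
      a u v = (inner ℂ (S ⟨e u, hx⟩) (e v) : ℂ)) :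
    Function.Bijective (fun x : S.domain => S x) ∧
      ∃ C : ℝ, 0 < C ∧ ∀ x : S.domain, ‖(x : H)‖ ≤ C * ‖S x‖ := by
  obtain ⟨M₀, hM₀⟩ := habound
  obtain ⟨Ψ₁, hΨ₁⟩ := hΦ₁ext
  set M : ℝ := max M₀ 0 with hMdef
  have hM0 : (0:ℝ) ≤ M := le_max_right _ _
  have hM : ∀ u v : V, ‖a u v‖ ≤ M * ‖u‖ * ‖v‖ := by
    intro u v
    refine (hM₀ u v).trans ?_
    have : (0:ℝ) ≤ ‖u‖ * ‖v‖ := by positivity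
    nlinarith [le_max_left M₀ (0:ℝ)]
  -- Construct the bounded operator A : V → V with ⟪A u, v⟫ = a u v
  set F : V → (V →L[ℂ] ℂ) := fun u =>
    LinearMap.mkContinuous (a u) (M * ‖u‖) (fun v => hM u v) with hF
  set A' : V → V := fun u => (InnerProductSpace.toDual ℂ V).symm (F u) with hA'
  have key : ∀ u v : V, (inner ℂ (A' u) v : ℂ) = a u v := fun u v => by
    rw [hA']; exact InnerProductSpace.toDual_symm_apply
  have hadd : ∀ u w : V, A' (u + w) = A' u + A' w := by
    intro u w
    apply ext_inner_right ℂ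
    intro v
    rw [inner_add_left, key, key, key, map_add]; rfl
  have hsmul : ∀ (c : ℂ) (u : V), A' (c • u) = c • A' u := by
    intro c u
    apply ext_inner_right ℂ
    intro v
    rw [inner_smul_left, key, key, map_smulₛₗ]
    simp
  set Alin : V →ₗ[ℂ] V := { toFun := A', map_add' := hadd, map_smul' := hsmul } with hAlin
  set A : V →L[ℂ] V := Alin.mkContinuous M (fun u => by
    rw [hAlin]
    show ‖A' u‖ ≤ M * ‖u‖
    rw [hA']
    simp only [LinearIsometryEquiv.norm_map]
    exact LinearMap.mkContinuous_norm_le _ (by positivity) _) with hA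
  have keyA : ∀ u v : V, (inner ℂ (A u) v : ℂ) = a u v := key
  -- lower bounds
  set c : ℝ := α / (1 + max ‖Φ₁‖ ‖Φ₂‖) with hc
  have hden : (0:ℝ) < 1 + max ‖Φ₁‖ ‖Φ₂‖ := by positivity
  have hcpos : 0 < c := div_pos hα hden
  have hA1 : ∀ u, c * ‖u‖ ≤ ‖A u‖ := by
    intro u
    by_cases hu : u = 0
    · simp [hu]
    have hun : (0:ℝ) < ‖u‖ := norm_pos_iff.mpr hu
    have h1 : ‖a u u‖ ≤ ‖A u‖ * ‖u‖ := by
      rw [← keyA]; exact norm_inner_le_norm _ _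
    have h2 : ‖a u (Φ₁ u)‖ ≤ ‖A u‖ * (‖Φ₁‖ * ‖u‖) := by
      rw [← keyA]
      exact (norm_inner_le_norm _ _).trans
        (by gcongr; exact Φ₁.le_opNorm u)
    have hco := hcoer1 u
    have hΦle : ‖Φ₁‖ ≤ max ‖Φ₁‖ ‖Φ₂‖ := le_max_left _ _
    have hAnn : (0:ℝ) ≤ ‖A u‖ := norm_nonneg _
    rw [hc, div_mul_eq_mul_div, div_le_iff₀ hden]
    have step : α * ‖u‖ * ‖u‖ ≤ ‖A u‖ * (1 + max ‖Φ₁‖ ‖Φ₂‖) * ‖u‖ := by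
      nlinarith [mul_nonneg (mul_nonneg hAnn (sub_nonneg.mpr hΦle)) hun.le]
    exact le_of_mul_le_mul_right step hun
  have hA2 : ∀ u, c * ‖u‖ ≤ ‖ContinuousLinearMap.adjoint A u‖ := by
    intro u
    by_cases hu : u = 0
    · simp [hu]
    have hun : (0:ℝ) < ‖u‖ := norm_pos_iff.mpr hu
    set B := ContinuousLinearMap.adjoint A u with hB
    have h1 : ‖a u u‖ ≤ ‖B‖ * ‖u‖ := by
      have : (a u u) = inner ℂ u B := by
        rw [hB, ContinuousLinearMap.adjoint_inner_right, keyA]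
      rw [this]
      exact (norm_inner_le_norm _ _).trans (by rw [mul_comm])
    have h2 : ‖a (Φ₂ u) u‖ ≤ ‖B‖ * (‖Φ₂‖ * ‖u‖) := by
      have : (a (Φ₂ u) u) = inner ℂ (Φ₂ u) B := by
        rw [hB, ContinuousLinearMap.adjoint_inner_right, keyA]
      rw [this]
      refine (norm_inner_le_norm _ _).trans ?_
      rw [mul_comm]
      gcongr
      exact Φ₂.le_opNorm u
    have hco := hcoer2 u
    have hΦle : ‖Φ₂‖ ≤ max ‖Φ₁‖ ‖Φ₂‖ := le_max_right _ _
    have hBnn : (0:ℝ) ≤ ‖B‖ := norm_nonneg _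
    rw [hc, div_mul_eq_mul_div, div_le_iff₀ hden]
    have step : α * ‖u‖ * ‖u‖ ≤ ‖B‖ * (1 + max ‖Φ₁‖ ‖Φ₂‖) * ‖u‖ := by
      nlinarith [mul_nonneg (mul_nonneg hBnn (sub_nonneg.mpr hΦle)) hun.le]
    exact le_of_mul_le_mul_right step hun
  have hAsurj : Function.Surjective A := aux_surj_stmt12 A c hcpos hA1 hA2
  -- the norm bound for S
  set C₀ : ℝ := ‖e‖ * ((1 + ‖Ψ₁‖) * ‖e‖) / α with hC₀
  have hbound : ∀ x : S.domain, ‖(x : H)‖ ≤ C₀ * ‖S x‖ := by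
    intro x
    obtain ⟨u, hu, -⟩ := (hSdom x).mp x.2
    have hx' : e u ∈ S.domain := hu ▸ x.2
    have hxx : (⟨e u, hx'⟩ : S.domain) = x := Subtype.ext hu
    have hval := hSval u hx'
    rw [hxx] at hval
    by_cases hu0 : u = 0
    · have : (x : H) = 0 := by rw [← hu, hu0, map_zero]
      rw [this, norm_zero]
      positivity
    have hun : (0:ℝ) < ‖u‖ := norm_pos_iff.mpr hu0
    have h1 : ‖a u u‖ ≤ ‖S x‖ * (‖e‖ * ‖u‖) := by
      rw [hval u]
      refine (norm_inner_le_norm _ _).trans ?_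
      gcongr
      exact e.le_opNorm u
    have h2 : ‖a u (Φ₁ u)‖ ≤ ‖S x‖ * (‖Ψ₁‖ * (‖e‖ * ‖u‖)) := by
      rw [hval (Φ₁ u)]
      refine (norm_inner_le_norm _ _).trans ?_
      have : e (Φ₁ u) = Ψ₁ (e u) := (hΨ₁ u).symm
      rw [this]
      gcongr
      exact (Ψ₁.le_opNorm _).trans (by gcongr; exact e.le_opNorm u)
    have hco := hcoer1 u
    have hSnn : (0:ℝ) ≤ ‖S x‖ := norm_nonneg _
    have hunorm : α * ‖u‖ ≤ ‖S x‖ * ((1 + ‖Ψ₁‖) * ‖e‖) := by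
      have key2 : α * ‖u‖ * ‖u‖ ≤ ‖S x‖ * ((1 + ‖Ψ₁‖) * ‖e‖) * ‖u‖ := by
        nlinarith [sq_nonneg ‖u‖]
      exact le_of_mul_le_mul_right key2 hun
    have hxu : ‖(x : H)‖ ≤ ‖e‖ * ‖u‖ := by
      rw [← hu]; exact e.le_opNorm u
    rw [hC₀, div_mul_eq_mul_div, le_div_iff₀ hα]
    have hΨnn : (0:ℝ) ≤ ‖Ψ₁‖ := norm_nonneg _
    have henn : (0:ℝ) ≤ ‖e‖ := norm_nonneg _
    nlinarith
  have hinj : Function.Injective (fun x : S.domain => S x) := by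
    intro x y hxy
    simp only at hxy
    have hsub : S (x - y) = 0 := by rw [S.map_sub, hxy, sub_self]
    have := hbound (x - y)
    rw [hsub, norm_zero, mul_zero] at this
    have : ((x - y : S.domain) : H) = 0 := norm_le_zero_iff.mp this
    have : (x : H) - (y : H) = 0 := by
      rwa [Submodule.coe_sub] at this
    exact Subtype.ext (sub_eq_zero.mp this)
  have hsurjS : Function.Surjective (fun x : S.domain => S x) := by
    intro f
    obtain ⟨u, hAu⟩ := hAsurj (ContinuousLinearMap.adjoint e f)
    have hav : ∀ v : V, a u v = (inner ℂ f (e v) : ℂ) := by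
      intro v
      rw [← keyA]
      show (inner ℂ (A u) v : ℂ) = inner ℂ f (e v)
      rw [hAu, ContinuousLinearMap.adjoint_inner_left]
    have hmem : e u ∈ S.domain := by
      rw [hSdom]
      exact ⟨u, rfl, ‖f‖, fun v => by rw [hav]; exact norm_inner_le_norm _ _⟩
    refine ⟨⟨e u, hmem⟩, ?_⟩
    show S ⟨e u, hmem⟩ = f
    set g : H := S ⟨e u, hmem⟩ with hg
    have hgv : ∀ v : V, (inner ℂ (g - f) (e v) : ℂ) = 0 := by
      intro v
      rw [inner_sub_left, ← (hSval u hmem v), hav v, sub_self]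
    have hfun : (fun y : H => (inner ℂ (g - f) y : ℂ)) = fun _ => 0 := by
      apply Continuous.ext_on he_dense (innerSL ℂ (g - f)).continuous
        continuous_const
      rintro y hy
      obtain ⟨v, rfl⟩ := hy
      exact hgv v
    have : (inner ℂ (g - f) (g - f) : ℂ) = 0 := congrFun hfun (g - f)
    have : g - f = 0 := inner_self_eq_zero.mp this
    rw [sub_eq_zero] at this
    exact this
  refine ⟨⟨hinj, hsurjS⟩, C₀ + 1, ?_, ?_⟩
  · have : (0:ℝ) ≤ C₀ := by rw [hC₀]; positivity
    linarith
  · intro x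
    refine (hbound x).trans ?_
    have : (0:ℝ) ≤ ‖S x‖ := norm_nonneg _
    nlinarith
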